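/- Let M be an n×n matrix over RatFunc ℂ all of whose entries have intDegree ≤ 0. Then M - X • 1 is invertible as a matrix over RatFunc ℂ, and every entry of (M - X • 1)⁻¹ has intDegree ≤ 0. In particular the spectral inverse S(M) := (M - X • 1)⁻¹ + X • 1 exists. -/

import Mathlib

set_option synthInstance.maxHeartbeats 1000000
set_option maxHeartbeats 1000000

open Matrix Multiplicative

noncomputable instance : DecidableEq (RatFunc ℂ) := Classical.decEq _

noncomputable def vv : Valuation (RatFunc ℂ) (WithZero (Multiplicative ℤ)) :=
  FunctionField.inftyValuation ℂ

lemma vv_ne (w : RatFunc ℂ) (hw : w ≠ 0) : vv w = ↑(ofAdd w.intDegree) := by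
  show RatFunc.inftyValuation ℂ w = _
  rw [RatFunc.inftyValuation_apply, RatFunc.inftyValuation_of_nonzero (hx := hw)]
  rfl

lemma vv_le_one_iff (w : RatFunc ℂ) : vv w ≤ 1 ↔ w.intDegree ≤ 0 := by
  rcases eq_or_ne w 0 with h | h
  · simp [h, vv, FunctionField.inftyValuation_apply, FunctionField.inftyValuationDef]
  · rw [vv_ne w h, show (1 : WithZero (Multiplicative ℤ)) = ↑(ofAdd (0:ℤ)) by rfl,
      WithZero.coe_le_coe, Multiplicative.ofAdd_le]

lemma pow1 (k : ℕ) :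
    (↑(ofAdd (1:ℤ)) : WithZero (Multiplicative ℤ))^k = ↑(ofAdd (k:ℤ)) := by
  rw [← WithZero.coe_pow, ← ofAdd_nsmul]
  norm_num

lemma vv_single_le {n : ℕ} (i k : Fin n) : vv ((Pi.single i 1 : Fin n → RatFunc ℂ) k) ≤ 1 := by
  rcases eq_or_ne k i with rfl | h
  · rw [Pi.single_eq_same]
    exact le_of_eq (map_one vv)
  · rw [Pi.single_eq_of_ne h]
    simp

lemma vv_X : vv (RatFunc.X : RatFunc ℂ) = ↑(ofAdd (1:ℤ)) := by
  rw [vv_ne _ RatFunc.X_ne_zero, RatFunc.intDegree_X]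

theorem isUnit_sub_X_smul_one_and_intDegree_inv_le_zero
    {n : ℕ} (M : Matrix (Fin n) (Fin n) (RatFunc ℂ))
    (hdeg : ∀ i j, (M i j).intDegree ≤ 0) :
    IsUnit (M - (RatFunc.X : RatFunc ℂ) • 1) ∧
    ∀ i j, (((M - (RatFunc.X : RatFunc ℂ) • 1)⁻¹) i j).intDegree ≤ 0 := by
  set A := M - (RatFunc.X : RatFunc ℂ) • 1 with hA
  have hM : ∀ i j, vv (M i j) ≤ 1 := fun i j => (vv_le_one_iff _).mpr (hdeg i j)
  have one_lt : (1 : WithZero (Multiplicative ℤ)) < ↑(ofAdd (1:ℤ)) := by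
    rw [show (1 : WithZero (Multiplicative ℤ)) = ↑(ofAdd (0:ℤ)) by rfl,
      WithZero.coe_lt_coe, Multiplicative.ofAdd_lt]
    norm_num
  have hdiag : ∀ i, vv (A i i) = ↑(ofAdd (1:ℤ)) := by
    intro i
    have : A i i = M i i - RatFunc.X := by
      simp [hA, Matrix.sub_apply, Matrix.smul_apply, one_apply_eq]
    rw [this, Valuation.map_sub_eq_of_lt_right, vv_X]
    rw [vv_X]
    exact lt_of_le_of_lt (hM i i) one_lt
  have hoff : ∀ i j, i ≠ j → vv (A i j) ≤ 1 := by
    intro i j hij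
    have : A i j = M i j := by
      simp [hA, Matrix.sub_apply, Matrix.smul_apply, one_apply_ne hij]
    rw [this]; exact hM i j
  have hent : ∀ i j, vv (A i j) ≤ ↑(ofAdd (1:ℤ)) := by
    intro i j
    rcases eq_or_ne i j with rfl | hij
    · exact le_of_eq (hdiag i)
    · exact le_trans (hoff i j hij) one_lt.le
  have hsign : ∀ σ : Equiv.Perm (Fin n),
      vv (((Equiv.Perm.sign σ : ℤ) : RatFunc ℂ)) = 1 := by
    intro σ
    rcases Int.units_eq_one_or (Equiv.Perm.sign σ) with h | h <;>
      simp [h, Valuation.map_neg]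
  have hprodbound : ∀ (g : Fin n → RatFunc ℂ) (i₀ : Fin n), vv (g i₀) ≤ 1 →
      (∀ k, vv (g k) ≤ ↑(ofAdd (1:ℤ))) →
      vv (∏ k, g k) ≤ ↑(ofAdd ((n-1:ℕ):ℤ)) := by
    intro g i₀ h0 h1
    rw [map_prod, ← Finset.mul_prod_erase Finset.univ _ (Finset.mem_univ i₀)]
    calc vv (g i₀) * ∏ k ∈ Finset.univ.erase i₀, vv (g k)
        ≤ 1 * ∏ k ∈ Finset.univ.erase i₀, (↑(ofAdd (1:ℤ)) : WithZero (Multiplicative ℤ)) :=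
          mul_le_mul' h0 (Finset.prod_le_prod' fun k _ => h1 k)
      _ = ↑(ofAdd ((n-1:ℕ):ℤ)) := by
          rw [one_mul, Finset.prod_const, Finset.card_erase_of_mem (Finset.mem_univ i₀),
            Finset.card_univ, Fintype.card_fin, pow1]
  have hn1 : ∀ (_ : Fin n), (↑(ofAdd ((n-1:ℕ):ℤ)) : WithZero (Multiplicative ℤ))
      < ↑(ofAdd (n:ℤ)) := by
    intro i₀
    rw [WithZero.coe_lt_coe, Multiplicative.ofAdd_lt]
    have : 1 ≤ n := i₀.pos
    omega
  have h1 : vv (((Equiv.Perm.sign (1 : Equiv.Perm (Fin n)) : ℤ) : RatFunc ℂ)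
      * ∏ k, A ((1 : Equiv.Perm (Fin n)) k) k) = ↑(ofAdd (n:ℤ)) := by
    rw [Valuation.map_mul, hsign, one_mul, map_prod]
    simp only [Equiv.Perm.one_apply, hdiag]
    rw [Finset.prod_const, Finset.card_univ, Fintype.card_fin, pow1]
  have hdet : vv A.det = ↑(ofAdd (n:ℤ)) := by
    rw [det_apply']
    have h0 : vv (((Equiv.Perm.sign (1 : Equiv.Perm (Fin n)) : ℤ) : RatFunc ℂ)
        * ∏ k, A ((1 : Equiv.Perm (Fin n)) k) k) ≠ 0 := by
      rw [h1]; exact WithZero.coe_ne_zero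
    have hlt : ∀ σ : Equiv.Perm (Fin n), σ ≠ 1 →
        vv (((Equiv.Perm.sign σ : ℤ) : RatFunc ℂ) * ∏ k, A (σ k) k)
          < vv (((Equiv.Perm.sign (1 : Equiv.Perm (Fin n)) : ℤ) : RatFunc ℂ)
            * ∏ k, A ((1 : Equiv.Perm (Fin n)) k) k) := by
      intro σ hσ
      obtain ⟨i₀, hi₀⟩ : ∃ i, σ i ≠ i := by
        by_contra h
        push_neg at h
        exact hσ (Equiv.ext h)
      have hle : vv (((Equiv.Perm.sign σ : ℤ) : RatFunc ℂ) * ∏ k, A (σ k) k)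
          ≤ ↑(ofAdd ((n-1:ℕ):ℤ)) := by
        rw [Valuation.map_mul, hsign, one_mul]
        exact hprodbound _ i₀ (hoff _ _ hi₀) (fun k => hent _ _)
      rw [h1]
      exact lt_of_le_of_lt hle (hn1 i₀)
    rw [Valuation.map_sum_eq_of_lt vv (Finset.mem_univ 1)
      (fun σ hσ => hlt σ (by simpa using (Finset.mem_sdiff.mp hσ).2)), h1]
  have hdet0 : A.det ≠ 0 := by
    intro h
    rw [h, map_zero] at hdet
    exact WithZero.coe_ne_zero hdet.symm
  have hU : IsUnit A := (isUnit_iff_isUnit_det A).mpr (isUnit_iff_ne_zero.mpr hdet0)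
  refine ⟨hU, fun i j => ?_⟩
  have hadj : vv (A.adjugate i j) ≤ ↑(ofAdd ((n-1:ℕ):ℤ)) := by
    rw [adjugate_apply, det_apply']
    apply Valuation.map_sum_le
    intro σ _
    rw [Valuation.map_mul, hsign, one_mul]
    set B := A.updateRow j (Pi.single i 1) with hB
    apply hprodbound (fun k => B (σ k) k) (σ⁻¹ j)
    · have hj : σ (σ⁻¹ j) = j := σ.apply_symm_apply j
      simp only [hj, hB, Matrix.updateRow_self]
      exact vv_single_le i _
    · intro k
      rcases eq_or_ne (σ k) j with h | h
      · simp only [hB, h, Matrix.updateRow_self]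
        exact le_trans (vv_single_le i _) one_lt.le
      · rw [hB, Matrix.updateRow_ne h]
        exact hent _ _
  rw [← vv_le_one_iff]
  have hinv : A⁻¹ i j = (A.det)⁻¹ * A.adjugate i j := by
    rw [inv_def, Ring.inverse_eq_inv', Matrix.smul_apply, smul_eq_mul]
  rw [hinv, Valuation.map_mul, Valuation.map_inv, hdet]
  calc (↑(ofAdd (n:ℤ)) : WithZero (Multiplicative ℤ))⁻¹ * vv (A.adjugate i j)
      ≤ (↑(ofAdd (n:ℤ)))⁻¹ * ↑(ofAdd ((n-1:ℕ):ℤ)) := mul_le_mul_right hadj _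
    _ ≤ 1 := by
        rw [← WithZero.coe_inv, ← WithZero.coe_mul,
          show (1 : WithZero (Multiplicative ℤ)) = ↑(ofAdd (0:ℤ)) from rfl,
          WithZero.coe_le_coe, ← ofAdd_neg, ← ofAdd_add, Multiplicative.ofAdd_le]
        omega
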